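/- Let a ∈ C([0,1]) satisfy |n ∫₀¹ e^{-nt} a(t) dt| = O(e^{-n}) as n → ∞ through the natural numbers. Then a ≡ 0. -/

import Mathlib

open Real Set intervalIntegral Filter Finset

private lemma aux_sq_range (x s : ℝ) (hx0 : 0 < x) (hx1 : x ≤ 1) (hs0 : 0 < s) (hs1 : s ≤ 1) :
    0 ≤ 1 - (x - s)^2 ∧ 1 - (x - s)^2 ≤ 1 := by
  constructor
  · nlinarith
  · nlinarith [sq_nonneg (x - s)]

private lemma aux_low (s p u v : ℝ) (hp : 0 < p) (hps : p ≤ s) (huv : u ≤ v)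
    (hu : 0 < u) : u * p ≤ s * Real.exp v - s := by
  have he := Real.add_one_le_exp v
  have hs : (0:ℝ) ≤ s := by linarith
  nlinarith [mul_nonneg hs (by linarith : (0:ℝ) ≤ Real.exp v - 1 - v),
    mul_nonneg hs (by linarith : (0:ℝ) ≤ v - u),
    mul_nonneg (by linarith : (0:ℝ) ≤ s - p) hu.le]

private lemma aux_near (s v : ℝ) (hs0 : 0 < s) (hs1 : s ≤ 1) (hv : 0 ≤ v) :
    (s * Real.exp (-v) - s)^2 ≤ v^2 := by
  have h1 : 1 - v ≤ Real.exp (-v) := by linarith [Real.add_one_le_exp (-v)]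
  have h2 : Real.exp (-v) ≤ 1 := Real.exp_le_one_iff.mpr (by linarith)
  have h3 : 0 ≤ s - s * Real.exp (-v) := by nlinarith
  have h4 : s - s * Real.exp (-v) ≤ v := by nlinarith
  nlinarith

private lemma aux_sq_mono (d e : ℝ) (h0 : 0 < d) (h : d ≤ e) : 1 - e^2 ≤ 1 - d^2 := by
  nlinarith

private lemma aux_bern (m : ℕ) : (1:ℝ)/2 ≤ (1 - (1/((m:ℝ)+1))^2)^m := by
  have hm1 : (0:ℝ) < (m:ℝ)+1 := by positivity
  have hfrac1 : 1/((m:ℝ)+1) ≤ 1 := by rw [div_le_one hm1]; linarith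
  have hfrac0 : (0:ℝ) ≤ 1/((m:ℝ)+1) := by positivity
  have hb := one_add_mul_le_pow (a := -((1/((m:ℝ)+1))^2)) (by nlinarith) m
  have he : (1 + -((1/((m:ℝ)+1))^2)) = 1 - (1/((m:ℝ)+1))^2 := by ring
  rw [he] at hb
  have e : (1/((m:ℝ)+1))^2 * ((m:ℝ)+1)^2 = 1 := by field_simp
  have hkey2 : (m:ℝ) * (1/((m:ℝ)+1))^2 ≤ 1/2 := by
    nlinarith [e, mul_nonneg (by positivity : (0:ℝ) ≤ (1/((m:ℝ)+1))^2) (sq_nonneg (m:ℝ))]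
  linarith

set_option maxHeartbeats 1000000 in
private lemma key_lemma (a : ℝ → ℝ) (ha : ContinuousOn a (Icc 0 1)) (C : ℝ)
    (hbound : ∀ n : ℕ, |(n : ℝ) * ∫ t in (0:ℝ)..1, Real.exp (-(n : ℝ) * t) * a t|
      ≤ C * Real.exp (-(n : ℝ)))
    (t₀ : ℝ) (ht0 : 0 ≤ t₀) (ht1 : t₀ < 1) : a t₀ ≤ 0 := by
  by_contra hpos
  push_neg at hpos
  obtain ⟨M, hM⟩ := IsCompact.exists_bound_of_continuousOn isCompact_Icc ha
  have hM' : ∀ t ∈ Icc (0:ℝ) 1, |a t| ≤ M := fun t ht => hM t ht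
  have hM0 : 0 ≤ M := le_trans (abs_nonneg _) (hM' 0 ⟨le_refl 0, by norm_num⟩)
  have hC0 : 0 ≤ C := by
    have h := hbound 0
    simpa using le_trans (abs_nonneg _) h
  have h1t : 0 < 1 - t₀ := by linarith
  obtain ⟨q, hq⟩ := exists_nat_gt (1/(1-t₀))
  have hinv1 : 1 ≤ 1/(1-t₀) := by
    rw [le_div_iff₀ h1t]; linarith
  have hq1 : 1 < (q:ℝ) := lt_of_le_of_lt hinv1 hq
  have hqN : 1 ≤ q := by exact_mod_cast hq1.le
  have hq0 : (0:ℝ) < q := by linarith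
  have hqt : 1 < (q:ℝ) * (1 - t₀) := by
    rw [div_lt_iff₀ h1t] at hq; linarith [hq]
  set σ : ℝ := Real.exp (-((q:ℝ) * t₀)) with hσ
  set ρ : ℝ := Real.exp (-(q:ℝ)) with hρ
  have hρpos : 0 < ρ := Real.exp_pos _
  have hσpos : 0 < σ := Real.exp_pos _
  have hσ1 : σ ≤ 1 := by
    rw [hσ]; apply Real.exp_le_one_iff.mpr; nlinarith
  have hρ1 : ρ ≤ 1 := by
    rw [hρ]; apply Real.exp_le_one_iff.mpr; nlinarith
  have hρσ : ρ ≤ σ := by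
    rw [hρ, hσ]; apply Real.exp_le_exp.mpr; nlinarith
  have hσρ : ρ * Real.exp 1 < σ := by
    have hcomp : σ = ρ * Real.exp ((q:ℝ) * (1 - t₀)) := by
      rw [hρ, hσ, ← Real.exp_add]; congr 1; ring
    rw [hcomp]
    exact mul_lt_mul_of_pos_left (Real.exp_lt_exp.mpr hqt) hρpos
  have h27 : ρ * 2.7 < σ := by
    have he : (2.7:ℝ) < Real.exp 1 := by
      have := Real.exp_one_gt_d9; norm_num at this ⊢; linarith
    calc ρ * 2.7 < ρ * Real.exp 1 := mul_lt_mul_of_pos_left he hρpos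
      _ < σ := hσρ
  have hkey : 2*σ*ρ + ρ^2 < σ^2 := by
    nlinarith [mul_lt_mul_of_pos_left h27 hρpos, mul_lt_mul_of_pos_left h27 hσpos]
  set θ : ℝ := (2*σ*ρ + ρ^2) + (1 - σ^2) with hθ
  have hθ1 : θ < 1 := by rw [hθ]; nlinarith [hkey]
  have hθ0 : 0 ≤ θ := by
    rw [hθ]
    nlinarith [hσ1, hσpos, hρpos, mul_pos hσpos hρpos, sq_nonneg ρ]
  have hσsq : 0 ≤ 1 - σ^2 := by nlinarith [hσ1, hσpos]
  -- integrability helper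
  have hint : ∀ g : ℝ → ℝ, Continuous g →
      IntervalIntegrable (fun t => g t * a t) MeasureTheory.volume 0 1 := by
    intro g hg
    apply ContinuousOn.intervalIntegrable
    rw [uIcc_of_le (by norm_num : (0:ℝ) ≤ 1)]
    exact hg.continuousOn.mul ha
  set I : ℕ → ℝ := fun n => ∫ t in (0:ℝ)..1, Real.exp (-(n : ℝ) * t) * a t with hI
  have hIM : ∀ n : ℕ, |I n| ≤ M := by
    intro n
    have h := intervalIntegral.norm_integral_le_of_norm_le_const
      (C := M) (f := fun t => Real.exp (-(n : ℝ) * t) * a t) (a := 0) (b := 1) ?_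
    · simp only [hI]
      simpa using h
    · intro x hx
      rw [Set.uIoc_of_le (by norm_num : (0:ℝ) ≤ 1)] at hx
      have hx0 : 0 < x := hx.1
      have hx1 : x ≤ 1 := hx.2
      have h1 : Real.exp (-(n : ℝ) * x) ≤ 1 := by
        apply Real.exp_le_one_iff.mpr
        have hn : (0:ℝ) ≤ (n:ℝ) := Nat.cast_nonneg n
        nlinarith
      have h2 : |a x| ≤ M := hM' x ⟨hx0.le, hx1⟩
      have h3 : (0:ℝ) < Real.exp (-(n : ℝ) * x) := Real.exp_pos _
      calc ‖Real.exp (-(n : ℝ) * x) * a x‖ = Real.exp (-(n : ℝ) * x) * |a x| := by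
            rw [Real.norm_eq_abs, abs_mul, abs_of_pos h3]
        _ ≤ 1 * M := mul_le_mul h1 h2 (abs_nonneg _) (by norm_num)
        _ = M := one_mul M
  have hIρ : ∀ n : ℕ, |I (q * n)| ≤ (C + M) * ρ ^ n := by
    intro n
    cases n with
    | zero => simpa using le_trans (hIM 0) (by linarith)
    | succ k =>
      have hn1 : 1 ≤ q * (k+1) := Nat.one_le_iff_ne_zero.mpr (by positivity)
      have h := hbound (q * (k+1))
      have habs : |I (q*(k+1))| * ((q*(k+1) : ℕ) : ℝ) ≤ C * Real.exp (-((q*(k+1) : ℕ):ℝ)) := by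
        calc |I (q*(k+1))| * ((q*(k+1):ℕ):ℝ)
            = |((q*(k+1):ℕ):ℝ) * I (q*(k+1))| := by
              rw [abs_mul, Nat.abs_cast]; ring
          _ ≤ C * Real.exp (-((q*(k+1) : ℕ):ℝ)) := h
      have hge1 : (1:ℝ) ≤ ((q*(k+1):ℕ):ℝ) := by exact_mod_cast hn1
      have hIabs : |I (q*(k+1))| ≤ C * Real.exp (-((q*(k+1) : ℕ):ℝ)) := by
        nlinarith [abs_nonneg (I (q*(k+1)))]
      have hexp : Real.exp (-((q*(k+1) : ℕ):ℝ)) = ρ ^ (k+1) := by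
        rw [hρ, ← Real.exp_nat_mul]
        congr 1
        push_cast
        ring
      rw [hexp] at hIabs
      have hmono : C * ρ^(k+1) ≤ (C+M) * ρ^(k+1) :=
        mul_le_mul_of_nonneg_right (by linarith) (by positivity)
      linarith
  -- THE UPPER BOUND
  have hupper : ∀ m : ℕ,
      |∫ t in (0:ℝ)..1, (1 - (Real.exp (-((q:ℝ) * t)) - σ)^2)^m * a t| ≤ (C + M) * θ^m := by
    intro m
    have hpt : ∀ t : ℝ, (1 - (Real.exp (-((q:ℝ)*t)) - σ)^2)^m * a t
        = ∑ j ∈ Finset.range (m+1), ∑ i ∈ Finset.range (j+1),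
            ((m.choose j : ℝ) * (j.choose i) * (1-σ^2)^(m-j) * (2*σ)^(j-i) * (-1)^i)
              * (Real.exp (-((q*(j+i) : ℕ):ℝ) * t) * a t) := by
      intro t
      set x := Real.exp (-((q:ℝ)*t)) with hx
      have h1 : (1 - (x - σ)^2) = (2*σ*x - x^2) + (1 - σ^2) := by ring
      rw [h1, add_pow, Finset.sum_mul]
      apply Finset.sum_congr rfl
      intro j hj
      have hbin : (2*σ*x - x^2)^j
          = ∑ i ∈ Finset.range (j+1), (-1:ℝ)^i * (2*σ)^(j-i) * x^(j+i) * (j.choose i) := by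
        rw [show (2*σ*x - x^2) = (-(x^2)) + 2*σ*x from by ring, add_pow]
        apply Finset.sum_congr rfl
        intro i hi
        have hij : i ≤ j := Nat.lt_succ_iff.mp (Finset.mem_range.mp hi)
        have e1 : 2*i + (j-i) = j + i := by omega
        have h2 : (-(x^2))^i * (2*σ*x)^(j-i) = (-1)^i * (2*σ)^(j-i) * x^(j+i) := by
          calc (-(x^2))^i * (2*σ*x)^(j-i)
              = ((-1)^i * (2*σ)^(j-i)) * (x^(2*i) * x^(j-i)) := by
                rw [neg_pow, mul_pow, ← pow_mul]; ring
            _ = (-1)^i * (2*σ)^(j-i) * x^(j+i) := by rw [← pow_add, e1]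
        rw [h2]
      rw [hbin, Finset.sum_mul, Finset.sum_mul, Finset.sum_mul]
      apply Finset.sum_congr rfl
      intro i hi
      have hxpow : x ^ (j+i) = Real.exp (-((q*(j+i) : ℕ):ℝ) * t) := by
        rw [hx, ← Real.exp_nat_mul]
        congr 1
        push_cast
        ring
      rw [← hxpow]
      ring
    simp only [hpt]
    have hint2 : ∀ j i : ℕ, IntervalIntegrable (fun t =>
        ((m.choose j : ℝ) * (j.choose i) * (1-σ^2)^(m-j) * (2*σ)^(j-i) * (-1)^i)
          * (Real.exp (-((q*(j+i) : ℕ):ℝ) * t) * a t)) MeasureTheory.volume 0 1 := by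
      intro j i
      exact (hint _ (Real.continuous_exp.comp (continuous_const.mul continuous_id))).const_mul _
    rw [intervalIntegral.integral_finset_sum]
    · have hswap : ∀ j ∈ Finset.range (m+1),
          (∫ t in (0:ℝ)..1, ∑ i ∈ Finset.range (j+1),
            ((m.choose j : ℝ) * (j.choose i) * (1-σ^2)^(m-j) * (2*σ)^(j-i) * (-1)^i)
              * (Real.exp (-((q*(j+i) : ℕ):ℝ) * t) * a t))
          = ∑ i ∈ Finset.range (j+1),
            ((m.choose j : ℝ) * (j.choose i) * (1-σ^2)^(m-j) * (2*σ)^(j-i) * (-1)^i)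
              * I (q*(j+i)) := by
        intro j hj
        rw [intervalIntegral.integral_finset_sum]
        · apply Finset.sum_congr rfl
          intro i hi
          rw [intervalIntegral.integral_const_mul]
        · intro i hi
          exact hint2 j i
      rw [Finset.sum_congr rfl hswap]
      calc |∑ j ∈ Finset.range (m+1), ∑ i ∈ Finset.range (j+1),
              ((m.choose j : ℝ) * (j.choose i) * (1-σ^2)^(m-j) * (2*σ)^(j-i) * (-1)^i)
                * I (q*(j+i))|
          ≤ ∑ j ∈ Finset.range (m+1), ∑ i ∈ Finset.range (j+1),
              |((m.choose j : ℝ) * (j.choose i) * (1-σ^2)^(m-j) * (2*σ)^(j-i) * (-1)^i)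
                * I (q*(j+i))| := by
            refine le_trans (Finset.abs_sum_le_sum_abs _ _) ?_
            exact Finset.sum_le_sum fun j hj => Finset.abs_sum_le_sum_abs _ _
        _ ≤ ∑ j ∈ Finset.range (m+1), ∑ i ∈ Finset.range (j+1),
              ((m.choose j : ℝ) * (j.choose i) * (1-σ^2)^(m-j) * (2*σ)^(j-i))
                * ((C+M) * ρ^(j+i)) := by
            apply Finset.sum_le_sum
            intro j hj
            apply Finset.sum_le_sum
            intro i hi
            rw [abs_mul]
            have h3 : (0:ℝ) ≤ (1-σ^2)^(m-j) := pow_nonneg hσsq _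
            have h4 : (0:ℝ) ≤ (2*σ)^(j-i) := pow_nonneg (by linarith) _
            have h1 : (0:ℝ) ≤ (m.choose j : ℝ) := Nat.cast_nonneg _
            have h2 : (0:ℝ) ≤ (j.choose i : ℝ) := Nat.cast_nonneg _
            have hcoef : |((m.choose j : ℝ) * (j.choose i) * (1-σ^2)^(m-j) * (2*σ)^(j-i) * (-1)^i)|
                = (m.choose j : ℝ) * (j.choose i) * (1-σ^2)^(m-j) * (2*σ)^(j-i) := by
              rw [abs_mul, abs_pow, abs_neg, abs_one, one_pow, mul_one]
              apply abs_of_nonneg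
              positivity
            rw [hcoef]
            apply mul_le_mul_of_nonneg_left (hIρ (j+i))
            positivity
        _ = (C+M) * θ^m := by
            have hθm : θ^m = ∑ j ∈ Finset.range (m+1),
                ∑ i ∈ Finset.range (j+1),
                  ((m.choose j : ℝ) * (j.choose i) * (1-σ^2)^(m-j) * (2*σ)^(j-i)) * ρ^(j+i) := by
              have h1 : θ^m = ∑ j ∈ Finset.range (m+1),
                  (ρ^2 + 2*σ*ρ)^j * (1-σ^2)^(m-j) * ((m.choose j : ℝ)) := by
                rw [← add_pow]
                congr 1
                rw [hθ]; ring
              rw [h1]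
              apply Finset.sum_congr rfl
              intro j hj
              rw [add_pow, Finset.sum_mul, Finset.sum_mul]
              apply Finset.sum_congr rfl
              intro i hi
              have hij : i ≤ j := Nat.lt_succ_iff.mp (Finset.mem_range.mp hi)
              have e1 : 2*i + (j-i) = j + i := by omega
              have h2 : (ρ^2)^i * (2*σ*ρ)^(j-i) = (2*σ)^(j-i) * ρ^(j+i) := by
                calc (ρ^2)^i * (2*σ*ρ)^(j-i)
                    = (2*σ)^(j-i) * (ρ^(2*i) * ρ^(j-i)) := by
                      rw [mul_pow, ← pow_mul]; ring
                  _ = (2*σ)^(j-i) * ρ^(j+i) := by rw [← pow_add, e1]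
              rw [h2]
              ring
            rw [hθm, Finset.mul_sum]
            apply Finset.sum_congr rfl
            intro j hj
            rw [Finset.mul_sum]
            apply Finset.sum_congr rfl
            intro i hi
            ring
    · intro j hj
      have heq : (fun t => ∑ i ∈ Finset.range (j+1),
          ((m.choose j : ℝ) * (j.choose i) * (1-σ^2)^(m-j) * (2*σ)^(j-i) * (-1)^i)
            * (Real.exp (-((q*(j+i) : ℕ):ℝ) * t) * a t))
          = fun t => (∑ i ∈ Finset.range (j+1),
            ((m.choose j : ℝ) * (j.choose i) * (1-σ^2)^(m-j) * (2*σ)^(j-i) * (-1)^i)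
              * Real.exp (-((q*(j+i) : ℕ):ℝ) * t)) * a t := by
        funext t
        rw [Finset.sum_mul]
        apply Finset.sum_congr rfl
        intro i hi
        ring
      rw [heq]
      apply hint
      apply continuous_finset_sum
      intro i _
      exact continuous_const.mul (Real.continuous_exp.comp (continuous_mul_left _))
  clear hIρ hIM hbound
  -- THE LOWER BOUND SETUP
  set ε := a t₀ with hε
  have hcw : ContinuousWithinAt a (Icc 0 1) t₀ := ha t₀ ⟨ht0, ht1.le⟩
  have hev : ∀ᶠ t in nhdsWithin t₀ (Icc 0 1), ε/2 < a t :=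
    hcw.eventually_const_lt (by linarith)
  obtain ⟨η, hη0, hball⟩ : ∃ η > 0, ∀ t ∈ Icc (0:ℝ) 1, |t - t₀| < η → ε/2 < a t := by
    obtain ⟨η, hη, hsub⟩ := Metric.mem_nhdsWithin_iff.mp hev
    exact ⟨η, hη, fun t hts hd => hsub ⟨by simpa [Metric.mem_ball, Real.dist_eq] using hd, hts⟩⟩
  set η' := min (η/2) (1 - t₀) with hη'
  have hη'0 : 0 < η' := lt_min (by linarith) h1t
  have hη'1 : η' ≤ 1 - t₀ := min_le_right _ _
  have hη'η : η' < η := lt_of_le_of_lt (min_le_left _ _) (by linarith)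
  set l := max 0 (t₀ - η') with hl
  set r := t₀ + η' with hr
  have hl0 : 0 ≤ l := le_max_left _ _
  have hlt : l ≤ t₀ := max_le ht0 (by linarith)
  have hl1 : l ≤ 1 := le_trans hlt ht1.le
  have hrt : t₀ ≤ r := by rw [hr]; linarith
  have hr1 : r ≤ 1 := by rw [hr]; linarith
  have hmida : ∀ t ∈ Icc l r, ε/2 < a t := by
    intro t ht
    apply hball t ⟨le_trans hl0 ht.1, le_trans ht.2 hr1⟩
    rw [abs_lt]
    have hll : t₀ - η' ≤ l := le_max_right _ _
    have h2 : t ≤ t₀ + η' := ht.2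
    constructor
    · linarith [ht.1]
    · linarith
  set δ₀ := (q:ℝ) * η' * ρ with hδ₀
  have hδ₀pos : 0 < δ₀ := by positivity
  have hδ₀1 : δ₀ ≤ 1 := by
    have hQe : (q:ℝ) ≤ Real.exp (q:ℝ) := by linarith [Real.add_one_le_exp (q:ℝ)]
    have hQρ : (q:ℝ) * ρ ≤ 1 := by
      have h := mul_le_mul_of_nonneg_right hQe (Real.exp_pos (-(q:ℝ))).le
      rw [← Real.exp_add] at h
      simp at h
      rw [hρ]; linarith
    have hη'le1 : η' ≤ 1 := by linarith
    rw [hδ₀]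
    have h1 : (q:ℝ)*ρ*η' ≤ 1*η' := mul_le_mul_of_nonneg_right hQρ hη'0.le
    linarith
  set β := 1 - δ₀^2 with hβ
  have hβ0 : 0 ≤ β := by
    rw [hβ]
    have h := pow_le_one₀ hδ₀pos.le hδ₀1 (n := 2)
    linarith
  have hβ1 : β < 1 := by
    rw [hβ]
    have h := pow_pos hδ₀pos 2
    linarith
  have hxmem : ∀ t ∈ Icc (0:ℝ) 1, ρ ≤ Real.exp (-((q:ℝ)*t)) ∧ Real.exp (-((q:ℝ)*t)) ≤ 1 := by
    intro t ht
    constructor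
    · rw [hρ]
      apply Real.exp_le_exp.mpr
      have h := mul_le_mul_of_nonneg_left ht.2 hq0.le
      linarith
    · apply Real.exp_le_one_iff.mpr
      have h := mul_nonneg hq0.le ht.1
      linarith
  have hF01 : ∀ t ∈ Icc (0:ℝ) 1,
      0 ≤ 1 - (Real.exp (-((q:ℝ)*t)) - σ)^2 ∧ 1 - (Real.exp (-((q:ℝ)*t)) - σ)^2 ≤ 1 := by
    intro t ht
    obtain ⟨hx1, hx2⟩ := hxmem t ht
    exact aux_sq_range _ _ (Real.exp_pos _) hx2 hσpos hσ1
  have hoffL : ∀ t ∈ Icc (0:ℝ) 1, t ≤ t₀ - η' →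
      1 - (Real.exp (-((q:ℝ)*t)) - σ)^2 ≤ β := by
    intro t ht hle
    have hd : η' ≤ t₀ - t := by linarith
    have hcomp : Real.exp (-((q:ℝ)*t)) = σ * Real.exp ((q:ℝ) * (t₀ - t)) := by
      rw [hσ, ← Real.exp_add]; congr 1; ring
    have hdiff : δ₀ ≤ Real.exp (-((q:ℝ)*t)) - σ := by
      rw [hcomp, hδ₀]
      have h := aux_low σ ρ ((q:ℝ)*η') ((q:ℝ)*(t₀-t)) hρpos hρσ
        (mul_le_mul_of_nonneg_left hd hq0.le) (mul_pos hq0 hη'0)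
      linarith
    rw [hβ]
    exact aux_sq_mono _ _ hδ₀pos hdiff
  have hoffR : ∀ t ∈ Icc (0:ℝ) 1, t₀ + η' ≤ t →
      1 - (Real.exp (-((q:ℝ)*t)) - σ)^2 ≤ β := by
    intro t ht hle
    have hd : η' ≤ t - t₀ := by linarith
    have hcomp : σ = Real.exp (-((q:ℝ)*t)) * Real.exp ((q:ℝ) * (t - t₀)) := by
      rw [hσ, ← Real.exp_add]; congr 1; ring
    have hx1 : ρ ≤ Real.exp (-((q:ℝ)*t)) := (hxmem t ht).1
    have hdiff : δ₀ ≤ σ - Real.exp (-((q:ℝ)*t)) := by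
      rw [hcomp, hδ₀]
      have h := aux_low (Real.exp (-((q:ℝ)*t))) ρ ((q:ℝ)*η') ((q:ℝ)*(t - t₀)) hρpos hx1
        (mul_le_mul_of_nonneg_left hd hq0.le) (mul_pos hq0 hη'0)
      linarith
    have hsq : (Real.exp (-((q:ℝ)*t)) - σ)^2 = (σ - Real.exp (-((q:ℝ)*t)))^2 := by ring
    rw [hβ, hsq]
    exact aux_sq_mono _ _ hδ₀pos hdiff
  have hnear : ∀ t, t₀ ≤ t → (Real.exp (-((q:ℝ)*t)) - σ)^2 ≤ ((q:ℝ) * (t - t₀))^2 := by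
    intro t hle
    have hcomp : Real.exp (-((q:ℝ)*t)) = σ * Real.exp (-((q:ℝ) * (t - t₀))) := by
      rw [hσ, ← Real.exp_add]; congr 1; ring
    rw [hcomp]
    exact aux_near σ ((q:ℝ) * (t - t₀)) hσpos hσ1
      (mul_nonneg hq0.le (by linarith))
  -- choose m
  set γ := max θ β with hγ
  have hγ0 : 0 ≤ γ := le_trans hθ0 (le_max_left _ _)
  have hγ1 : γ < 1 := max_lt hθ1 hβ1
  have hsummable : Summable (fun m : ℕ => ((m:ℝ)+1) * γ^m) := by
    have h1 : Summable (fun m : ℕ => (m:ℝ)^1 * γ^m) :=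
      summable_pow_mul_geometric_of_norm_lt_one 1
        (by rw [Real.norm_eq_abs, abs_of_nonneg hγ0]; exact hγ1)
    have h2 : Summable (fun m : ℕ => γ^m) := summable_geometric_of_lt_one hγ0 hγ1
    apply (h1.add h2).congr
    intro m
    ring
  have htend : Tendsto (fun m : ℕ => (C+3*M) * (((m:ℝ)+1) * γ^m)) atTop (nhds 0) := by
    have h2 := hsummable.tendsto_atTop_zero.const_mul (C+3*M)
    simpa using h2
  have hev3 : ∀ᶠ m : ℕ in atTop, (C+3*M) * (((m:ℝ)+1) * γ^m) < ε/(4*(q:ℝ)) :=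
    htend.eventually_lt_const (by positivity)
  obtain ⟨N, hN⟩ := exists_nat_gt (1/((q:ℝ)*η'))
  have hev2 : ∀ᶠ m : ℕ in atTop, 1/((q:ℝ)*((m:ℝ)+1)) ≤ η' := by
    rw [eventually_atTop]
    refine ⟨N, fun m hm => ?_⟩
    have hmN : (N:ℝ) ≤ (m:ℝ) := by exact_mod_cast hm
    have h1 : 1/((q:ℝ)*η') < (m:ℝ)+1 := by linarith
    rw [div_le_iff₀ (by positivity)]
    rw [div_lt_iff₀ (by positivity)] at h1
    linarith [h1]
  obtain ⟨m, hm2, hm3⟩ := (hev2.and hev3).exists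
  -- derive the contradiction for this m
  have hq2 : (0:ℝ) < 1/((q:ℝ)*((m:ℝ)+1)) := by positivity
  set w := t₀ + 1/((q:ℝ)*((m:ℝ)+1)) with hw
  have hwt : t₀ ≤ w := by rw [hw]; linarith
  have hwr : w ≤ r := by rw [hw, hr]; linarith [hm2]
  have hw1 : w ≤ 1 := le_trans hwr hr1
  have hPa : IntervalIntegrable
      (fun t => (1 - (Real.exp (-((q:ℝ)*t)) - σ)^2)^m * a t) MeasureTheory.volume 0 1 := by
    apply hint
    apply Continuous.pow
    apply Continuous.sub continuous_const
    apply Continuous.pow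
    exact Continuous.sub
      (Real.continuous_exp.comp (continuous_const.mul continuous_id).neg) continuous_const
  have hPsub : ∀ c d : ℝ, 0 ≤ c → c ≤ 1 → 0 ≤ d → d ≤ 1 →
      IntervalIntegrable (fun t => (1 - (Real.exp (-((q:ℝ)*t)) - σ)^2)^m * a t)
        MeasureTheory.volume c d := by
    intro c d h1 h2 h3 h4
    apply hPa.mono_set
    apply Set.uIcc_subset_uIcc <;> rw [uIcc_of_le (by norm_num : (0:ℝ) ≤ 1)]
    · exact ⟨h1, h2⟩
    · exact ⟨h3, h4⟩
  -- split the integral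
  have i1 := hPsub 0 l (le_refl 0) (by norm_num) hl0 hl1
  have i2 := hPsub l r hl0 hl1 (le_trans hl0 (le_trans hlt hrt)) hr1
  have i3 := hPsub r 1 (le_trans hl0 (le_trans hlt hrt)) hr1 (by norm_num) (le_refl 1)
  have i4 := hPsub l t₀ hl0 hl1 ht0 ht1.le
  have i5 := hPsub t₀ w ht0 ht1.le (le_trans ht0 hwt) hw1
  have i6 := hPsub w r (le_trans ht0 hwt) hw1 (le_trans ht0 hrt) hr1
  have i7 := hPsub l 1 hl0 hl1 (by norm_num) (le_refl 1)
  have i8 := hPsub t₀ r ht0 ht1.le (le_trans ht0 hrt) hr1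
  have hs1 := intervalIntegral.integral_add_adjacent_intervals i1 i7
  have hs2 := intervalIntegral.integral_add_adjacent_intervals i2 i3
  have hs3 := intervalIntegral.integral_add_adjacent_intervals i4 i8
  have hs4 := intervalIntegral.integral_add_adjacent_intervals i5 i6
  -- bounds on the outer pieces
  have houter : ∀ c d : ℝ, 0 ≤ c → d ≤ 1 → c ≤ d →
      (∀ x ∈ Set.Ioc c d, 1 - (Real.exp (-((q:ℝ)*x)) - σ)^2 ≤ β) →
      |∫ t in c..d, (1 - (Real.exp (-((q:ℝ)*t)) - σ)^2)^m * a t| ≤ M * β^m := by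
    intro c d hc hd hcd hβb
    have h := intervalIntegral.norm_integral_le_of_norm_le_const
      (C := M * β^m) (f := fun t => (1 - (Real.exp (-((q:ℝ)*t)) - σ)^2)^m * a t)
      (a := c) (b := d) ?_
    · rw [Real.norm_eq_abs] at h
      calc |∫ t in c..d, (1 - (Real.exp (-((q:ℝ)*t)) - σ)^2)^m * a t|
          ≤ M * β^m * |d - c| := h
        _ ≤ M * β^m * 1 := by
            apply mul_le_mul_of_nonneg_left _ (by positivity)
            rw [abs_of_nonneg (by linarith)]
            linarith
        _ = M * β^m := mul_one _
    · intro x hx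
      rw [Set.uIoc_of_le hcd] at hx
      have hxI : x ∈ Icc (0:ℝ) 1 := ⟨le_trans hc hx.1.le, le_trans hx.2 hd⟩
      have hFb : 1 - (Real.exp (-((q:ℝ)*x)) - σ)^2 ≤ β := hβb x hx
      have hF0 : 0 ≤ 1 - (Real.exp (-((q:ℝ)*x)) - σ)^2 := (hF01 x hxI).1
      rw [Real.norm_eq_abs, abs_mul, abs_of_nonneg (pow_nonneg hF0 m)]
      calc (1 - (Real.exp (-((q:ℝ)*x)) - σ)^2)^m * |a x|
          ≤ β^m * M := mul_le_mul (pow_le_pow_left₀ hF0 hFb m) (hM' x hxI)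
            (abs_nonneg _) (by positivity)
        _ = M * β^m := by ring
  have hLbound : |∫ t in (0:ℝ)..l, (1 - (Real.exp (-((q:ℝ)*t)) - σ)^2)^m * a t| ≤ M * β^m := by
    apply houter 0 l (le_refl 0) hl1 hl0
    intro x hx
    apply hoffL x ⟨hx.1.le, le_trans hx.2 hl1⟩
    rcases le_or_gt (t₀ - η') 0 with hc|hc
    · exfalso
      have hzero : l = 0 := max_eq_left hc
      rw [hzero] at hx
      exact absurd hx.2 (not_le.mpr hx.1)
    · have heq : l = t₀ - η' := max_eq_right hc.le
      rw [heq] at hx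
      exact hx.2
  have hRbound : |∫ t in r..(1:ℝ), (1 - (Real.exp (-((q:ℝ)*t)) - σ)^2)^m * a t| ≤ M * β^m := by
    apply houter r 1 (le_trans ht0 hrt) (le_refl 1) hr1
    intro x hx
    exact hoffR x ⟨le_trans (le_trans ht0 hrt) hx.1.le, hx.2⟩ hx.1.le
  -- middle pieces
  have hmid1 : 0 ≤ ∫ t in l..t₀, (1 - (Real.exp (-((q:ℝ)*t)) - σ)^2)^m * a t := by
    apply intervalIntegral.integral_nonneg hlt
    intro u hu
    have huI : u ∈ Icc (0:ℝ) 1 := ⟨le_trans hl0 hu.1, le_trans hu.2 ht1.le⟩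
    have hau : 0 < a u := lt_trans (by linarith) (hmida u ⟨hu.1, le_trans hu.2 hrt⟩)
    exact mul_nonneg (pow_nonneg (hF01 u huI).1 m) hau.le
  have hmid3 : 0 ≤ ∫ t in w..r, (1 - (Real.exp (-((q:ℝ)*t)) - σ)^2)^m * a t := by
    apply intervalIntegral.integral_nonneg hwr
    intro u hu
    have huI : u ∈ Icc (0:ℝ) 1 := ⟨le_trans (le_trans ht0 hwt) hu.1, le_trans hu.2 hr1⟩
    have hau : 0 < a u := lt_trans (by linarith)
      (hmida u ⟨le_trans hlt (le_trans hwt hu.1), hu.2⟩)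
    exact mul_nonneg (pow_nonneg (hF01 u huI).1 m) hau.le
  set κ := (1 - (1/((m:ℝ)+1))^2)^m with hκ
  have hm1pos : (0:ℝ) < (m:ℝ)+1 := by positivity
  have hfrac1 : (1/((m:ℝ)+1)) ≤ 1 := by
    rw [div_le_one hm1pos]; linarith
  have hfrac0 : (0:ℝ) ≤ 1/((m:ℝ)+1) := by positivity
  have hbase0 : 0 ≤ 1 - (1/((m:ℝ)+1))^2 := by
    have h := pow_le_one₀ hfrac0 hfrac1 (n := 2)
    linarith
  have hκhalf : 1/2 ≤ κ := by rw [hκ]; exact aux_bern m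
  have hmid2 : (ε/2) * κ * (w - t₀) ≤ ∫ t in t₀..w, (1 - (Real.exp (-((q:ℝ)*t)) - σ)^2)^m * a t := by
    have hconst : (∫ _t in t₀..w, (ε/2) * κ) = (w - t₀) * ((ε/2) * κ) := by
      rw [intervalIntegral.integral_const, smul_eq_mul]
    have hmono := intervalIntegral.integral_mono_on hwt
      (_root_.intervalIntegrable_const (c := (ε/2) * κ)) i5 ?_
    · rw [hconst] at hmono
      calc (ε/2) * κ * (w - t₀) = (w - t₀) * ((ε/2) * κ) := by ring
        _ ≤ _ := hmono
    · intro u hu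
      have huI : u ∈ Icc (0:ℝ) 1 := ⟨le_trans ht0 hu.1, le_trans hu.2 hw1⟩
      have hqu : (q:ℝ) * (w - t₀) = 1/((m:ℝ)+1) := by
        have hne1 : ((q:ℝ)) ≠ 0 := ne_of_gt hq0
        have hne2 : ((m:ℝ)+1) ≠ 0 := ne_of_gt hm1pos
        rw [hw]
        field_simp
        ring
      have hnb : (Real.exp (-((q:ℝ)*u)) - σ)^2 ≤ (1/((m:ℝ)+1))^2 := by
        have h1 := hnear u hu.1
        have h2 : ((q:ℝ) * (u - t₀))^2 ≤ ((q:ℝ) * (w - t₀))^2 := by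
          apply pow_le_pow_left₀ (mul_nonneg hq0.le (by linarith [hu.1]))
            (mul_le_mul_of_nonneg_left (by linarith [hu.2]) hq0.le)
        rw [hqu] at h2
        linarith
      have hFu : 1 - (1/((m:ℝ)+1))^2 ≤ 1 - (Real.exp (-((q:ℝ)*u)) - σ)^2 := by linarith
      have hPu : κ ≤ (1 - (Real.exp (-((q:ℝ)*u)) - σ)^2)^m := by
        rw [hκ]
        exact pow_le_pow_left₀ hbase0 hFu m
      have hau : ε/2 ≤ a u :=
        (hmida u ⟨le_trans hlt hu.1, le_trans hu.2 hwr⟩).le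
      have hκ0 : 0 ≤ κ := by rw [hκ]; exact pow_nonneg hbase0 m
      calc (ε/2) * κ ≤ a u * ((1 - (Real.exp (-((q:ℝ)*u)) - σ)^2)^m) :=
            mul_le_mul hau hPu hκ0 (by linarith)
        _ = (1 - (Real.exp (-((q:ℝ)*u)) - σ)^2)^m * a u := by ring
  -- assemble
  have hU := hupper m
  have htotal : (∫ t in (0:ℝ)..1, (1 - (Real.exp (-((q:ℝ)*t)) - σ)^2)^m * a t)
      = (∫ t in (0:ℝ)..l, (1 - (Real.exp (-((q:ℝ)*t)) - σ)^2)^m * a t)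
        + ((∫ t in l..t₀, (1 - (Real.exp (-((q:ℝ)*t)) - σ)^2)^m * a t)
          + ((∫ t in t₀..w, (1 - (Real.exp (-((q:ℝ)*t)) - σ)^2)^m * a t)
            + (∫ t in w..r, (1 - (Real.exp (-((q:ℝ)*t)) - σ)^2)^m * a t))
          + (∫ t in r..(1:ℝ), (1 - (Real.exp (-((q:ℝ)*t)) - σ)^2)^m * a t)) := by
    rw [hs4, hs3, hs2, hs1]
  have hlow : (ε/2) * κ * (w - t₀) - 2*(M*β^m)
      ≤ ∫ t in (0:ℝ)..1, (1 - (Real.exp (-((q:ℝ)*t)) - σ)^2)^m * a t := by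
    rw [htotal]
    have hL := neg_abs_le (∫ t in (0:ℝ)..l, (1 - (Real.exp (-((q:ℝ)*t)) - σ)^2)^m * a t)
    have hR := neg_abs_le (∫ t in r..(1:ℝ), (1 - (Real.exp (-((q:ℝ)*t)) - σ)^2)^m * a t)
    linarith [hLbound, hRbound, hmid1, hmid2, hmid3]
  have hub : (∫ t in (0:ℝ)..1, (1 - (Real.exp (-((q:ℝ)*t)) - σ)^2)^m * a t) ≤ (C+M)*θ^m :=
    le_trans (le_abs_self _) hU
  have hθγ : θ^m ≤ γ^m := pow_le_pow_left₀ hθ0 (le_max_left _ _) m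
  have hβγ : β^m ≤ γ^m := pow_le_pow_left₀ hβ0 (le_max_right _ _) m
  have hwdiff : w - t₀ = 1/((q:ℝ)*((m:ℝ)+1)) := by rw [hw]; ring
  have hcomb : (ε/4) * (1/((q:ℝ)*((m:ℝ)+1))) ≤ (C+3*M)*γ^m := by
    have hwd : 0 ≤ w - t₀ := by linarith
    have ha1 : (ε/2)*(1/2) ≤ (ε/2)*κ := mul_le_mul_of_nonneg_left hκhalf (by linarith)
    have h1 : (ε/4) * (w - t₀) ≤ (ε/2) * κ * (w - t₀) := by
      apply mul_le_mul_of_nonneg_right _ hwd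
      linarith
    have hA : (C+M)*θ^m ≤ (C+M)*γ^m := mul_le_mul_of_nonneg_left hθγ (by linarith)
    have hB : M*β^m ≤ M*γ^m := mul_le_mul_of_nonneg_left hβγ hM0
    have h2 : (C+M)*θ^m + 2*(M*β^m) ≤ (C+3*M)*γ^m := by linarith
    rw [← hwdiff]
    linarith [hlow, hub, h1]
  have hfinal : ε/(4*(q:ℝ)) ≤ (C+3*M)*γ^m*((m:ℝ)+1) := by
    have h := mul_le_mul_of_nonneg_right hcomb (le_of_lt hm1pos)
    have e2 : (ε/4) * (1/((q:ℝ)*((m:ℝ)+1))) * ((m:ℝ)+1) = ε/(4*(q:ℝ)) := by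
      field_simp
    rw [e2] at h
    exact h
  have hrearr : (C+3*M)*(((m:ℝ)+1)*γ^m) = (C+3*M)*γ^m*((m:ℝ)+1) := by ring
  rw [hrearr] at hm3
  linarith [hm3, hfinal]

theorem stmt_9 (a : ℝ → ℝ) (ha : ContinuousOn a (Icc 0 1))
    (C : ℝ)
    (hbound : ∀ n : ℕ, |(n : ℝ) * ∫ t in (0:ℝ)..1, Real.exp (-(n : ℝ) * t) * a t|
      ≤ C * Real.exp (-(n : ℝ))) :
    ∀ t ∈ Icc (0:ℝ) 1, a t = 0 := by
  have hkey : ∀ t₀ ∈ Ico (0:ℝ) 1, a t₀ = 0 := by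
    intro t₀ ht
    have h1 : a t₀ ≤ 0 := key_lemma a ha C hbound t₀ ht.1 ht.2
    have h2 : -a t₀ ≤ 0 := by
      apply key_lemma (fun t => -a t) ha.neg C ?_ t₀ ht.1 ht.2
      intro n
      have h := hbound n
      have hrw : (∫ t in (0:ℝ)..1, Real.exp (-(n : ℝ) * t) * (-a t))
          = -(∫ t in (0:ℝ)..1, Real.exp (-(n : ℝ) * t) * a t) := by
        rw [← intervalIntegral.integral_neg]
        congr 1
        funext t
        ring
      rw [hrw, mul_neg, abs_neg]
      exact h
    linarith
  intro t ht
  rcases eq_or_lt_of_le ht.2 with h1 | h1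
  · have hcw : ContinuousWithinAt a (Ico 0 1) t :=
      (ha t ht).mono Ico_subset_Icc_self
    have hne : (nhdsWithin t (Ico (0:ℝ) 1)).NeBot := by
      apply mem_closure_iff_nhdsWithin_neBot.mp
      rw [closure_Ico (by norm_num : (0:ℝ) ≠ 1), h1]
      exact ⟨by norm_num, le_refl 1⟩
    have ht1 : Tendsto a (nhdsWithin t (Ico 0 1)) (nhds (a t)) := hcw
    have ht2 : Tendsto a (nhdsWithin t (Ico 0 1)) (nhds 0) := by
      apply Tendsto.congr' ?_ tendsto_const_nhds
      filter_upwards [self_mem_nhdsWithin] with x hx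
      exact (hkey x hx).symm
    exact tendsto_nhds_unique ht1 ht2
  · exact hkey t ⟨ht.1, h1⟩
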